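/- (Theorem 2) Let I₀ > 0, α > 0 and q > 0 be real numbers, and define g(K_L, K_S) = I₀·(q^{K_L} − 1)/K_L + α·I₀·(q^(−K_S) − 1)/K_S for K_L > 0, K_S > 0. Then g is monotone nondecreasing in each argument: if 0 < K_L ≤ K_L' and 0 < K_S ≤ K_S' then g(K_L, K_S) ≤ g(K_L', K_S'). -/

import Mathlib

open Real

lemma convexOn_rpow_const (q : ℝ) (hq : 0 < q) :
    ConvexOn ℝ Set.univ (fun x : ℝ => q ^ x) := by
  have h : (fun x : ℝ => q ^ x) = fun x : ℝ => Real.exp (Real.log q * x) := by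
    funext x
    rw [Real.rpow_def_of_pos hq, mul_comm]
  rw [h]
  have := convexOn_exp.comp_affineMap (LinearMap.toAffineMap (Real.log q • LinearMap.id))
  simpa [Function.comp_def] using this

lemma slope_le (q : ℝ) (hq : 0 < q) {x y : ℝ} (hx : x ≠ 0) (hy : y ≠ 0) (hxy : x ≤ y) :
    (q ^ x - 1) / x ≤ (q ^ y - 1) / y := by
  have := (convexOn_rpow_const q hq).secant_mono (a := 0) (x := x) (y := y)
    (Set.mem_univ _) (Set.mem_univ _) (Set.mem_univ _) hx hy hxy
  simpa [Real.rpow_zero] using this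

theorem gsls_gain_monotone (I₀ α q : ℝ) (hI : 0 < I₀) (hα : 0 < α) (hq : 0 < q)
    (KL KL' KS KS' : ℝ) (hKL : 0 < KL) (hKL' : KL ≤ KL') (hKS : 0 < KS) (hKS' : KS ≤ KS') :
    I₀ * (q ^ KL - 1) / KL + α * I₀ * (q ^ (-KS) - 1) / KS ≤
      I₀ * (q ^ KL' - 1) / KL' + α * I₀ * (q ^ (-KS') - 1) / KS' := by
  have h1 : (q ^ KL - 1) / KL ≤ (q ^ KL' - 1) / KL' :=
    slope_le q hq hKL.ne' (lt_of_lt_of_le hKL hKL').ne' hKL'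
  have h2 : (q ^ (-KS) - 1) / KS ≤ (q ^ (-KS') - 1) / KS' := by
    have hKS0 : 0 < KS' := lt_of_lt_of_le hKS hKS'
    have := slope_le q hq (neg_ne_zero.mpr hKS0.ne') (neg_ne_zero.mpr hKS.ne')
      (neg_le_neg hKS')
    rw [div_neg, div_neg, neg_le_neg_iff] at this
    exact this
  have e1 : I₀ * (q ^ KL - 1) / KL = I₀ * ((q ^ KL - 1) / KL) := by ring
  have e2 : I₀ * (q ^ KL' - 1) / KL' = I₀ * ((q ^ KL' - 1) / KL') := by ring
  have e3 : α * I₀ * (q ^ (-KS) - 1) / KS = (α * I₀) * ((q ^ (-KS) - 1) / KS) := by ring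
  have e4 : α * I₀ * (q ^ (-KS') - 1) / KS' = (α * I₀) * ((q ^ (-KS') - 1) / KS') := by ring
  rw [e1, e2, e3, e4]
  have := mul_pos hα hI
  gcongr
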